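/- arXiv:2011.00306 — 2 statements merged into one kernel-verified Lean document; each statement's English description precedes it below -/
import Mathlib

section
/- For any almost periodic function a(t,x) (in t, uniformly in x) and any x ∈ D and ε > 0, there exists A ∈ W^{1,∞}(ℝ) such that a(t,x) + A'(t) ≥ â(x) − ε for a.e. t ∈ ℝ, where â(x) = lim_{T→∞}(1/T)∫₀^T a(t,x)dt. -/
open MeasureTheory Filter Real

noncomputable section

abbrev Pt (N : ℕ) := EuclideanSpace ℝ (Fin N)
abbrev XX (N : ℕ) := BoundedContinuousFunction (Pt N) ℝ

def UnifContOn2 {N : ℕ} (D : Set (Pt N)) (a : ℝ → Pt N → ℝ) : Prop :=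
  ∀ ε > 0, ∃ δ > 0, ∀ t t' : ℝ, ∀ x ∈ closure D, ∀ x' ∈ closure D,
    |t - t'| < δ → dist x x' < δ → |a t x - a t' x'| < ε

def BoundedCoef {N : ℕ} (a : ℝ → Pt N → ℝ) : Prop := ∃ C, ∀ t x, |a t x| ≤ C

def AlmostPeriodicUnif {N : ℕ} (D : Set (Pt N)) (a : ℝ → Pt N → ℝ) : Prop :=
  BoundedCoef a ∧ UnifContOn2 D a ∧
  ∀ ε > 0, ∃ L > 0, ∀ r : ℝ, ∃ τ ∈ Set.Icc r (r + L),
    ∀ t : ℝ, ∀ x ∈ closure D, |a (t + τ) x - a t x| ≤ ε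

def KernelH1 {N : ℕ} (κ : Pt N → ℝ) : Prop :=
  ContDiff ℝ 1 κ ∧ (∀ x, 0 ≤ κ x) ∧ 0 < κ 0 ∧ (∫ x, κ x) = 1 ∧
  ∃ μ > 0, ∃ M > 0, ∀ x : Pt N, M ≤ ‖x‖ →
    κ x ≤ Real.exp (-μ * ‖x‖) ∧ ‖fderiv ℝ κ x‖ ≤ Real.exp (-μ * ‖x‖)

structure NonlocalEvol {N : ℕ} (D : Set (Pt N)) (κ : Pt N → ℝ) (a : ℝ → Pt N → ℝ) where
  Φ : ℝ → ℝ → (XX N →L[ℝ] XX N)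
  init : ∀ s u₀, Φ s s u₀ = u₀
  sol : ∀ (s : ℝ) (u₀ : XX N), ∀ x ∈ closure D, ∀ t, s ≤ t →
    HasDerivAt (fun τ => Φ τ s u₀ x)
      ((∫ y in D, κ (y - x) * Φ t s u₀ y) + a t x * Φ t s u₀ x) t

def tsFilter : Filter (ℝ × ℝ) := Filter.comap (fun p : ℝ × ℝ => p.1 - p.2) Filter.atTop

def lamPL {N : ℕ} {D : Set (Pt N)} {κ : Pt N → ℝ} {a : ℝ → Pt N → ℝ}
    (E : NonlocalEvol D κ a) : ℝ :=
  Filter.limsup (fun p : ℝ × ℝ => Real.log ‖E.Φ p.1 p.2‖ / (p.1 - p.2)) tsFilter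

def lamPL' {N : ℕ} {D : Set (Pt N)} {κ : Pt N → ℝ} {a : ℝ → Pt N → ℝ}
    (E : NonlocalEvol D κ a) : ℝ :=
  Filter.liminf (fun p : ℝ × ℝ => Real.log ‖E.Φ p.1 p.2‖ / (p.1 - p.2)) tsFilter

def PESet {N : ℕ} (D : Set (Pt N)) (κ : Pt N → ℝ) (a : ℝ → Pt N → ℝ) : Set ℝ :=
  {lam | ∃ φ φt : ℝ → Pt N → ℝ,
    BoundedCoef φ ∧ UnifContOn2 D φ ∧
    (∀ t : ℝ, ∀ x ∈ closure D, 0 ≤ φ t x) ∧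
    (∃ x ∈ closure D, 0 < ⨅ t : ℝ, φ t x) ∧
    ∀ᵐ t : ℝ, ∀ x ∈ closure D,
      HasDerivAt (fun s => φ s x) (φt t x) t ∧
      lam * φ t x ≤ -φt t x + (∫ y in D, κ (y - x) * φ t y) + a t x * φ t x}

def PESet' {N : ℕ} (D : Set (Pt N)) (κ : Pt N → ℝ) (a : ℝ → Pt N → ℝ) : Set ℝ :=
  {lam | ∃ φ φt : ℝ → Pt N → ℝ,
    BoundedCoef φ ∧ UnifContOn2 D φ ∧
    (∃ c > 0, ∀ t : ℝ, ∀ x ∈ closure D, c ≤ φ t x) ∧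
    ∀ᵐ t : ℝ, ∀ x ∈ closure D,
      HasDerivAt (fun s => φ s x) (φt t x) t ∧
      -φt t x + (∫ y in D, κ (y - x) * φ t y) + a t x * φ t x ≤ lam * φ t x}

def lamPE {N : ℕ} (D : Set (Pt N)) (κ : Pt N → ℝ) (a : ℝ → Pt N → ℝ) : ℝ :=
  sSup (PESet D κ a)

def lamPE' {N : ℕ} (D : Set (Pt N)) (κ : Pt N → ℝ) (a : ℝ → Pt N → ℝ) : ℝ :=
  sInf (PESet' D κ a)



open intervalIntegral in

lemma uniform_mean (f : ℝ → ℝ) (hf : Continuous f) (C : ℝ) (hC : ∀ t, |f t| ≤ C)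
    (ahat : ℝ) (hmean : Tendsto (fun T => (∫ t in (0:ℝ)..T, f t) / T) atTop (nhds ahat))
    (hap : ∀ ε > 0, ∃ L > 0, ∀ r : ℝ, ∃ τ ∈ Set.Icc r (r + L), ∀ t, |f (t + τ) - f t| ≤ ε)
    (ε : ℝ) (hε : 0 < ε) :
    ∃ T > 0, ∀ t, |(∫ s in t..t+T, f s) - T * ahat| ≤ ε * T := by
  have hC0 : 0 ≤ C := le_trans (abs_nonneg _) (hC 0)
  obtain ⟨L, hL, hLap⟩ := hap (ε/3) (by positivity)
  -- choose T large
  have h1 : ∀ᶠ T in atTop, |(∫ t in (0:ℝ)..T, f t) / T - ahat| ≤ ε/3 := by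
    have := (Metric.tendsto_nhds.mp hmean (ε/3) (by positivity))
    filter_upwards [this] with T hT
    rw [Real.dist_eq] at hT; exact hT.le
  have h2 : ∀ᶠ T in atTop, (6 * L * C / ε ⊔ 1) ≤ T := eventually_ge_atTop _
  obtain ⟨T, hT1, hT2⟩ := (h1.and h2).exists
  have hT0 : (0:ℝ) < T := lt_of_lt_of_le (by norm_num : (0:ℝ) < 1) (le_trans (le_max_right _ _) hT2)
  have hTLC : 2 * L * C ≤ ε * T / 3 := by
    have h := le_trans (le_max_left _ _) hT2
    have := (div_le_iff₀ hε).mp h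
    nlinarith
  refine ⟨T, hT0, fun t => ?_⟩
  obtain ⟨τ, hτmem, hτ⟩ := hLap (-t)
  set r := t + τ with hr
  have hr0 : 0 ≤ r := by have := hτmem.1; simp [hr]; linarith
  have hrL : r ≤ L := by have := hτmem.2; simp [hr]; linarith
  have hint : ∀ a b : ℝ, IntervalIntegrable f volume a b := fun a b => hf.intervalIntegrable a b
  -- three pieces
  have e1 : (∫ s in (0:ℝ)..T, f (s + t)) = ∫ s in t..t+T, f s := by
    rw [integral_comp_add_right]; ring_nf
  have e2 : (∫ s in (0:ℝ)..T, f (s + r)) = ∫ s in r..T+r, f s := by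
    rw [integral_comp_add_right]; ring_nf
  have e3 : (∫ s in r..T+r, f s) = (∫ s in (0:ℝ)..T, f s) + (∫ s in T..T+r, f s) - (∫ s in (0:ℝ)..r, f s) := by
    have a1 := integral_add_adjacent_intervals (μ := volume) (hint 0 T) (hint T (T+r))
    have a2 := integral_add_adjacent_intervals (μ := volume) (hint 0 r) (hint r (T+r))
    linarith
  have b1 : |∫ s in (0:ℝ)..T, (f (s + t) - f (s + r))| ≤ ε/3 * T := by
    have := intervalIntegral.norm_integral_le_of_norm_le_const (C := ε/3)
      (f := fun s => f (s + t) - f (s + r)) (a := 0) (b := T) ?_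
    · simpa [abs_of_pos hT0, Real.norm_eq_abs] using this
    · intro s _
      have := hτ (s + t)
      rw [Real.norm_eq_abs, abs_sub_comm]
      calc |f (s + r) - f (s + t)| = |f ((s+t) + τ) - f (s+t)| := by rw [hr, ← add_assoc]
        _ ≤ ε/3 := hτ (s+t)
  have b2 : |∫ s in T..T+r, f s| ≤ L * C := by
    have := intervalIntegral.norm_integral_le_of_norm_le_const (C := C)
      (f := f) (a := T) (b := T+r) (fun s _ => by rw [Real.norm_eq_abs]; exact hC s)
    rw [Real.norm_eq_abs] at this
    calc |∫ s in T..T+r, f s| ≤ C * |T + r - T| := this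
      _ = C * r := by rw [show T + r - T = r by ring, abs_of_nonneg hr0]
      _ ≤ L * C := by nlinarith
  have b3 : |∫ s in (0:ℝ)..r, f s| ≤ L * C := by
    have := intervalIntegral.norm_integral_le_of_norm_le_const (C := C)
      (f := f) (a := 0) (b := r) (fun s _ => by rw [Real.norm_eq_abs]; exact hC s)
    rw [Real.norm_eq_abs] at this
    calc |∫ s in (0:ℝ)..r, f s| ≤ C * |r - 0| := this
      _ = C * r := by rw [sub_zero, abs_of_nonneg hr0]
      _ ≤ L * C := by nlinarith
  have b4 : |(∫ s in (0:ℝ)..T, f s) - T * ahat| ≤ ε/3 * T := by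
    have h := hT1
    have : (∫ s in (0:ℝ)..T, f s) - T * ahat = T * ((∫ t in (0:ℝ)..T, f t) / T - ahat) := by
      field_simp
    rw [this, abs_mul, abs_of_pos hT0]
    calc T * |(∫ t in (0:ℝ)..T, f t) / T - ahat| ≤ T * (ε/3) :=
          mul_le_mul_of_nonneg_left h hT0.le
      _ = ε/3 * T := by ring
  have bsplit : (∫ s in (0:ℝ)..T, (f (s + t) - f (s + r)))
      = (∫ s in (0:ℝ)..T, f (s+t)) - (∫ s in (0:ℝ)..T, f (s+r)) := by
    apply intervalIntegral.integral_sub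
    · exact (hf.comp (continuous_id.add continuous_const)).intervalIntegrable 0 T
    · exact (hf.comp (continuous_id.add continuous_const)).intervalIntegrable 0 T
  have key : (∫ s in t..t+T, f s) - T * ahat
      = (∫ s in (0:ℝ)..T, (f (s + t) - f (s + r)))
        + (∫ s in T..T+r, f s) - (∫ s in (0:ℝ)..r, f s)
        + ((∫ s in (0:ℝ)..T, f s) - T * ahat) := by
    rw [bsplit, e1, e2, e3]; ring
  rw [key]
  set A1 := ∫ s in (0:ℝ)..T, (f (s + t) - f (s + r))
  set A2 := ∫ s in T..T+r, f s
  set A3 := ∫ s in (0:ℝ)..r, f s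
  set A4 := (∫ s in (0:ℝ)..T, f s) - T * ahat
  have hsum : |A1 + A2 - A3 + A4| ≤ |A1| + |A2| + |A3| + |A4| := by
    calc |A1 + A2 - A3 + A4| ≤ |A1 + A2 - A3| + |A4| := abs_add_le _ _
      _ ≤ |A1 + A2| + |A3| + |A4| := by have := abs_sub (A1+A2) A3; linarith
      _ ≤ |A1| + |A2| + |A3| + |A4| := by have := abs_add_le A1 A2; linarith
  linarith

open intervalIntegral in

lemma corrector_of_uniform_mean (f : ℝ → ℝ) (hf : Continuous f) (C : ℝ) (hC : ∀ t, |f t| ≤ C)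
    (ahat T ε : ℝ) (hT0 : 0 < T) (hε : 0 < ε)
    (hT : ∀ t, |(∫ s in t..t+T, f s) - T * ahat| ≤ ε * T) :
    ∃ A A' : ℝ → ℝ,
      (∃ C, ∀ t, |A t| ≤ C) ∧ (∃ L : NNReal, LipschitzWith L A) ∧
      ∀ t : ℝ, HasDerivAt A (A' t) t ∧ ahat - ε ≤ f t + A' t := by
  set g : ℝ → ℝ := fun s => f s - ahat with hgdef
  have hg : Continuous g := hf.sub continuous_const
  have hgb : ∀ s, |g s| ≤ C + |ahat| := fun s => by
    have := hC s
    calc |g s| ≤ |f s| + |ahat| := abs_sub _ _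
      _ ≤ C + |ahat| := by linarith
  set B : ℝ → ℝ := fun t => ∫ s in (0:ℝ)..t, g s with hBdef
  have hBder : ∀ t, HasDerivAt B (g t) t := fun t =>
    intervalIntegral.integral_hasDerivAt_right (hg.intervalIntegrable 0 t)
      (hg.stronglyMeasurableAtFilter _ _) hg.continuousAt
  have hBcont : Continuous B := by
    rw [continuous_iff_continuousAt]; exact fun t => (hBder t).continuousAt
  have hBsub : ∀ t s : ℝ, B s - B t = ∫ u in t..s, g u := fun t s =>
    integral_interval_sub_left (hg.intervalIntegrable 0 s) (hg.intervalIntegrable 0 t)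
  have hBlip : ∀ t s : ℝ, |B s - B t| ≤ (C + |ahat|) * |s - t| := by
    intro t s
    rw [hBsub]
    have := intervalIntegral.norm_integral_le_of_norm_le_const (C := C + |ahat|)
      (f := g) (a := t) (b := s) (fun u _ => by rw [Real.norm_eq_abs]; exact hgb u)
    rw [Real.norm_eq_abs] at this; exact this
  -- key identity for the window integral of g
  have hwin : ∀ t, B (t+T) - B t = (∫ s in t..t+T, f s) - T * ahat := by
    intro t
    rw [hBsub]
    rw [intervalIntegral.integral_sub (hf.intervalIntegrable _ _)
      (intervalIntegrable_const), intervalIntegral.integral_const]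
    simp
  have hwinb : ∀ t, |B (t+T) - B t| ≤ ε * T := fun t => by rw [hwin]; exact hT t
  set A : ℝ → ℝ := fun t => T⁻¹ * (∫ s in t..t+T, B s) - B t with hAdef
  set A' : ℝ → ℝ := fun t => T⁻¹ * (B (t+T) - B t) - g t with hA'def
  have hAalt : ∀ t, A t = T⁻¹ * ((∫ s in (0:ℝ)..t+T, B s) - (∫ s in (0:ℝ)..t, B s)) - B t := by
    intro t
    rw [hAdef]
    simp only
    rw [integral_interval_sub_left (hBcont.intervalIntegrable 0 (t+T))
      (hBcont.intervalIntegrable 0 t)]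
  have hIB : ∀ y : ℝ, HasDerivAt (fun u => ∫ s in (0:ℝ)..u, B s) (B y) y := fun y =>
    intervalIntegral.integral_hasDerivAt_right (hBcont.intervalIntegrable 0 y)
      (hBcont.stronglyMeasurableAtFilter _ _) hBcont.continuousAt
  have hAder : ∀ t, HasDerivAt A (A' t) t := by
    intro t
    have h2 : HasDerivAt (fun u => ∫ s in (0:ℝ)..u+T, B s) (B (t+T)) t := by
      have := (hIB (t+T)).comp t ((hasDerivAt_id t).add_const T)
      simpa [Function.comp_def] using this
    have h3 := ((h2.sub (hIB t)).const_mul T⁻¹).sub (hBder t)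
    have : A = fun t => T⁻¹ * ((∫ s in (0:ℝ)..t+T, B s) - (∫ s in (0:ℝ)..t, B s)) - B t :=
      funext hAalt
    rw [this, hA'def]
    exact h3
  refine ⟨A, A', ⟨(C + |ahat|) * T, fun t => ?_⟩, ?_, fun t => ⟨hAder t, ?_⟩⟩
  · -- boundedness
    have hconst : (∫ s in t..t+T, (B t : ℝ)) = T * B t := by
      rw [intervalIntegral.integral_const]; simp
    have hAeq : A t = T⁻¹ * (∫ s in t..t+T, (B s - B t)) := by
      rw [intervalIntegral.integral_sub (hBcont.intervalIntegrable _ _)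
        (intervalIntegrable_const), hconst, hAdef]
      simp only
      field_simp
    rw [hAeq]
    have hb : |∫ s in t..t+T, (B s - B t)| ≤ ((C + |ahat|) * T) * T := by
      have := intervalIntegral.norm_integral_le_of_norm_le_const (C := (C + |ahat|) * T)
        (f := fun s => B s - B t) (a := t) (b := t+T) ?_
      · rw [Real.norm_eq_abs] at this
        calc |∫ s in t..t+T, (B s - B t)| ≤ (C + |ahat|) * T * |t + T - t| := this
          _ = (C + |ahat|) * T * T := by rw [show t + T - t = T by ring, abs_of_pos hT0]
      · intro s hs
        rw [Set.uIoc_of_le (by linarith : t ≤ t + T)] at hs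
        rw [Real.norm_eq_abs]
        calc |B s - B t| ≤ (C + |ahat|) * |s - t| := hBlip t s
          _ ≤ (C + |ahat|) * T := by
            have h1 := hs.1; have h2 := hs.2
            have habs : |s - t| ≤ T := by rw [abs_of_pos (by linarith)]; linarith
            have hCa : 0 ≤ C + |ahat| := le_trans (abs_nonneg _) (hgb 0)
            exact mul_le_mul_of_nonneg_left habs hCa
    rw [abs_mul, abs_of_pos (inv_pos.mpr hT0)]
    calc T⁻¹ * |∫ s in t..t+T, (B s - B t)| ≤ T⁻¹ * ((C + |ahat|) * T * T) := by
          exact mul_le_mul_of_nonneg_left hb (inv_pos.mpr hT0).le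
      _ = (C + |ahat|) * T := by field_simp
  · -- Lipschitz
    refine ⟨(ε + (C + |ahat|)).toNNReal, ?_⟩
    have hM : (0:ℝ) ≤ ε + (C + |ahat|) := by
      have := le_trans (abs_nonneg _) (hgb 0); linarith
    apply lipschitzWith_of_nnnorm_deriv_le (fun t => (hAder t).differentiableAt)
    intro t
    rw [← NNReal.coe_le_coe, coe_nnnorm, Real.coe_toNNReal _ hM, (hAder t).deriv,
      Real.norm_eq_abs]
    have h1 : |T⁻¹ * (B (t+T) - B t)| ≤ ε := by
      rw [abs_mul, abs_of_pos (inv_pos.mpr hT0)]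
      calc T⁻¹ * |B (t+T) - B t| ≤ T⁻¹ * (ε * T) :=
            mul_le_mul_of_nonneg_left (hwinb t) (inv_pos.mpr hT0).le
        _ = ε := by field_simp
    have h2 := hgb t
    calc |A' t| ≤ |T⁻¹ * (B (t+T) - B t)| + |g t| := abs_sub _ _
      _ ≤ ε + (C + |ahat|) := by linarith
  · -- lower bound
    have h1 : |T⁻¹ * (B (t+T) - B t)| ≤ ε := by
      rw [abs_mul, abs_of_pos (inv_pos.mpr hT0)]
      calc T⁻¹ * |B (t+T) - B t| ≤ T⁻¹ * (ε * T) :=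
            mul_le_mul_of_nonneg_left (hwinb t) (inv_pos.mpr hT0).le
        _ = ε := by field_simp
    have h2 : f t + A' t = ahat + T⁻¹ * (B (t+T) - B t) := by
      rw [hA'def]; simp only [hgdef]; ring
    rw [h2]
    have := abs_le.mp h1
    linarith [this.1]

theorem exists_corrector {N : ℕ} (D : Set (Pt N))
    (a : ℝ → Pt N → ℝ) (ha : AlmostPeriodicUnif D a)
    (x : Pt N) (hx : x ∈ closure D)
    (ahat : ℝ)
    (hmean : Tendsto (fun T => (∫ t in (0:ℝ)..T, a t x) / T) atTop (nhds ahat))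
    (ε : ℝ) (hε : 0 < ε) :
    ∃ A A' : ℝ → ℝ,
      (∃ C, ∀ t, |A t| ≤ C) ∧ (∃ L : NNReal, LipschitzWith L A) ∧
      ∀ᵐ t : ℝ, HasDerivAt A (A' t) t ∧ ahat - ε ≤ a t x + A' t := by
  set f : ℝ → ℝ := fun t => a t x with hfdef
  obtain ⟨⟨C, hC⟩, hUC, hAP⟩ := ha
  have hfc : Continuous f := by
    rw [Metric.continuous_iff]
    intro b ε' hε'
    obtain ⟨δ, hδ, h⟩ := hUC ε' hε'
    refine ⟨δ, hδ, fun t ht => ?_⟩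
    rw [Real.dist_eq] at ht ⊢
    exact h t b x hx x hx ht (by simpa [dist_self] using hδ)
  have hap : ∀ ε > 0, ∃ L > 0, ∀ r : ℝ, ∃ τ ∈ Set.Icc r (r + L),
      ∀ t, |f (t + τ) - f t| ≤ ε := by
    intro ε' hε'
    obtain ⟨L, hL, h⟩ := hAP ε' hε'
    exact ⟨L, hL, fun r => by
      obtain ⟨τ, hτm, hτ⟩ := h r
      exact ⟨τ, hτm, fun t => hτ t x hx⟩⟩
  obtain ⟨T, hT0, hT⟩ := uniform_mean f hfc C (fun t => hC t x) ahat hmean hap ε hε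
  obtain ⟨A, A', hAb, hAl, hA⟩ :=
    corrector_of_uniform_mean f hfc C (fun t => hC t x) ahat T ε hT0 hε hT
  exact ⟨A, A', hAb, hAl, Filter.Eventually.of_forall hA⟩

end
end

section
/- Let Ω ⊂ ℝ^N be compact, T > 0, and w a positive continuous function on [0,T] × Ω. Define θ(x,y) = (1/T)∫₀^T w(t,y)/w(t,x) dt. Then either w(t,x) is independent of x, or there exists x* ∈ Ω such that θ(x*,y) ≥ 1 for all y ∈ Ω, with strict inequality for some y ∈ Ω. -/
open MeasureTheory Filter Real

noncomputable section

lemma cont_eq_of_ae_eq {f : ℝ → ℝ} (hf : Continuous f) {c T : ℝ} (hT : 0 < T)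
    (h : ∀ᵐ t ∂(volume.restrict (Set.Ioc 0 T)), f t = c) :
    ∀ t ∈ Set.Icc (0:ℝ) T, f t = c := by
  intro t ht
  by_contra hne
  have hU : IsOpen {s : ℝ | f s ≠ c} := isOpen_compl_singleton.preimage hf
  have hcl : t ∈ closure (Set.Ioo 0 T) := by rw [closure_Ioo hT.ne]; exact ht
  have hnon : ({s : ℝ | f s ≠ c} ∩ Set.Ioo 0 T).Nonempty := by
    rcases mem_closure_iff.1 hcl _ hU hne with ⟨s, hs1, hs2⟩
    exact ⟨s, hs1, hs2⟩
  have hpos : 0 < volume ({s : ℝ | f s ≠ c} ∩ Set.Ioo 0 T) :=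
    (hU.inter isOpen_Ioo).measure_pos _ hnon
  rw [ae_restrict_iff' measurableSet_Ioc] at h
  rw [Filter.eventually_iff, mem_ae_iff] at h
  have hsub : {s : ℝ | f s ≠ c} ∩ Set.Ioo 0 T ⊆ {x | x ∈ Set.Ioc 0 T → f x = c}ᶜ := by
    intro s hs
    simp only [Set.mem_compl_iff, Set.mem_setOf_eq, not_forall]
    exact ⟨Set.Ioo_subset_Ioc_self hs.2, hs.1⟩
  exact absurd (measure_mono_null hsub h) hpos.ne'

theorem ratio_average_lemma {N : ℕ} (Ω : Set (Pt N)) (hΩ : IsCompact Ω)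
    (T : ℝ) (hT : 0 < T) (w : ℝ → Pt N → ℝ)
    (hwc : ContinuousOn (fun p : ℝ × Pt N => w p.1 p.2) (Set.Icc 0 T ×ˢ Ω))
    (hwpos : ∀ t ∈ Set.Icc (0:ℝ) T, ∀ x ∈ Ω, 0 < w t x) :
    (∀ t ∈ Set.Icc (0:ℝ) T, ∀ x ∈ Ω, ∀ y ∈ Ω, w t x = w t y) ∨
    ∃ xs ∈ Ω,
      (∀ y ∈ Ω, 1 ≤ (∫ t in (0:ℝ)..T, w t y / w t xs) / T) ∧
      (∃ y ∈ Ω, 1 < (∫ t in (0:ℝ)..T, w t y / w t xs) / T) := by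
  by_cases hconst : ∀ t ∈ Set.Icc (0:ℝ) T, ∀ x ∈ Ω, ∀ y ∈ Ω, w t x = w t y
  · exact Or.inl hconst
  right
  push_neg at hconst
  obtain ⟨t0, ht0, x0, hx0, y0, hy0, hne⟩ := hconst
  -- Tietze extension of log w
  set K : Set (ℝ × Pt N) := Set.Icc (0:ℝ) T ×ˢ Ω with hK
  have hKc : IsClosed K := isClosed_Icc.prod hΩ.isClosed
  have hvc : ContinuousOn (fun p : ℝ × Pt N => Real.log (w p.1 p.2)) K :=
    hwc.log (fun p hp => (hwpos p.1 hp.1 p.2 hp.2).ne')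
  obtain ⟨G, hG⟩ := ContinuousMap.exists_restrict_eq (Y := ℝ) hKc ⟨K.restrict (fun p => Real.log (w p.1 p.2)), hvc.restrict⟩
  have hGK : ∀ p ∈ K, G p = Real.log (w p.1 p.2) := by
    intro p hp
    have := DFunLike.congr_fun hG (⟨p, hp⟩ : K)
    exact this
  have hWK : ∀ p ∈ K, Real.exp (G p) = w p.1 p.2 := by
    intro p hp
    rw [hGK p hp, Real.exp_log (hwpos p.1 hp.1 p.2 hp.2)]
  -- the function gl
  set gl : Pt N → ℝ := fun x => ∫ t in (0:ℝ)..T, G (t, x) with hgl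
  have hglc : Continuous gl := by
    have : Continuous (Function.uncurry fun (x : Pt N) (t : ℝ) => G (t, x)) :=
      G.continuous.comp (continuous_snd.prodMk continuous_fst)
    exact intervalIntegral.continuous_parametric_intervalIntegral_of_continuous' this 0 T
  obtain ⟨xs, hxs, hmin⟩ := hΩ.exists_isMinOn ⟨x0, hx0⟩ hglc.continuousOn
  refine ⟨xs, hxs, ?_⟩
  -- measure
  set μ : Measure ℝ := volume.restrict (Set.Ioc 0 T) with hμ
  haveI : NeZero μ := ⟨Measure.measure_univ_ne_zero.mp (by
    rw [hμ, Measure.restrict_apply_univ, Real.volume_Ioc, sub_zero]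
    exact (ENNReal.ofReal_pos.2 hT).ne')⟩
  haveI : IsFiniteMeasure μ := by
    constructor
    rw [hμ, Measure.restrict_apply_univ, Real.volume_Ioc]
    exact ENNReal.ofReal_lt_top
  have hμuniv : (μ Set.univ).toReal = T := by
    rw [hμ, Measure.restrict_apply_univ, Real.volume_Ioc, sub_zero, ENNReal.toReal_ofReal hT.le]
  -- key step for each y
  have key : ∀ y ∈ Ω, (∃ k ≥ (0:ℝ),
      (∀ t ∈ Set.Icc (0:ℝ) T, w t y = Real.exp k * w t xs) ∧
      (∫ t in (0:ℝ)..T, w t y / w t xs) / T = Real.exp k) ∨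
      1 < (∫ t in (0:ℝ)..T, w t y / w t xs) / T := by
    intro y hy
    set F : ℝ → ℝ := fun t => G (t, y) - G (t, xs) with hF
    have hFc : Continuous F := by
      apply Continuous.sub
      · exact G.continuous.comp (continuous_id.prodMk continuous_const)
      · exact G.continuous.comp (continuous_id.prodMk continuous_const)
    have hFi : Integrable F μ :=
      ((hFc.continuousOn.integrableOn_compact isCompact_Icc).mono_set Set.Ioc_subset_Icc_self)
    have hgFi : Integrable (Real.exp ∘ F) μ :=
      (((Real.continuous_exp.comp hFc).continuousOn.integrableOn_compact isCompact_Icc).mono_set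
        Set.Ioc_subset_Icc_self)
    -- average of F
    have hintF : ∫ t, F t ∂μ = gl y - gl xs := by
      rw [hμ]
      rw [← intervalIntegral.integral_of_le hT.le]
      have hc1 : Continuous fun t : ℝ => G (t, y) := by fun_prop
      have hc2 : Continuous fun t : ℝ => G (t, xs) := by fun_prop
      rw [intervalIntegral.integral_sub (hc1.intervalIntegrable 0 T) (hc2.intervalIntegrable 0 T)]
    have havgF : ⨍ t, F t ∂μ = (gl y - gl xs) / T := by
      rw [average_eq, measureReal_def, hμuniv, hintF, smul_eq_mul, inv_mul_eq_div]
    have hk0 : 0 ≤ (gl y - gl xs) / T := div_nonneg (sub_nonneg.2 (hmin hy)) hT.le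
    -- average of exp ∘ F
    have hEqOn : Set.EqOn (fun t => Real.exp (F t)) (fun t => w t y / w t xs) (Set.uIcc 0 T) := by
      rw [Set.uIcc_of_le hT.le]
      intro t ht
      show Real.exp (G (t, y) - G (t, xs)) = w t y / w t xs
      rw [Real.exp_sub, hWK (t, y) ⟨ht, hy⟩, hWK (t, xs) ⟨ht, hxs⟩]
    have havgE : ⨍ t, Real.exp (F t) ∂μ = (∫ t in (0:ℝ)..T, w t y / w t xs) / T := by
      rw [average_eq, measureReal_def, hμuniv, smul_eq_mul, inv_mul_eq_div, hμ,
        ← intervalIntegral.integral_of_le hT.le, intervalIntegral.integral_congr hEqOn]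
    have jensen := strictConvexOn_exp.ae_eq_const_or_map_average_lt
      Real.continuous_exp.continuousOn isClosed_univ
      (Eventually.of_forall fun t => Set.mem_univ (F t)) hFi hgFi
    rcases jensen with hconst' | hlt
    · left
      refine ⟨(gl y - gl xs) / T, hk0, ?_, ?_⟩
      · have hptw : ∀ t ∈ Set.Icc (0:ℝ) T, F t = (gl y - gl xs) / T := by
          apply cont_eq_of_ae_eq hFc hT
          rw [← hμ]
          filter_upwards [hconst'] with t ht
          rw [ht, Function.const_apply, havgF]
        intro t ht
        have h1 := hptw t ht
        have h2 : Real.exp (F t) = w t y / w t xs := hEqOn (by rw [Set.uIcc_of_le hT.le]; exact ht)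
        rw [h1] at h2
        rw [h2, div_mul_cancel₀ _ (hwpos t ht xs hxs).ne']
      · rw [← havgE]
        have : ∀ᵐ t ∂μ, Real.exp (F t) = Real.exp ((gl y - gl xs) / T) := by
          filter_upwards [hconst'] with t ht
          rw [ht, Function.const_apply, havgF]
        rw [average_congr this, average_const]
    · right
      rw [havgF, havgE] at hlt
      calc (1:ℝ) ≤ Real.exp ((gl y - gl xs) / T) := Real.one_le_exp hk0
        _ < _ := hlt
  -- conclude
  have hge : ∀ y ∈ Ω, 1 ≤ (∫ t in (0:ℝ)..T, w t y / w t xs) / T := by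
    intro y hy
    rcases key y hy with ⟨k, hk, _, heq⟩ | hlt
    · rw [heq]; exact Real.one_le_exp hk
    · exact hlt.le
  refine ⟨hge, ?_⟩
  rcases key x0 hx0 with ⟨k0, hk0, hptw0, heq0⟩ | hlt0
  · rcases key y0 hy0 with ⟨k1, hk1, hptw1, heq1⟩ | hlt1
    · have hxsne : w t0 xs ≠ 0 := (hwpos t0 ht0 xs hxs).ne'
      have hkne : k0 ≠ k1 := by
        intro h
        apply hne
        rw [hptw0 t0 ht0, hptw1 t0 ht0, h]
      rcases lt_or_gt_of_ne hkne with h | h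
      · refine ⟨y0, hy0, ?_⟩
        rw [heq1, ← Real.exp_zero]
        exact Real.exp_lt_exp.2 (lt_of_le_of_lt hk0 h)
      · refine ⟨x0, hx0, ?_⟩
        rw [heq0, ← Real.exp_zero]
        exact Real.exp_lt_exp.2 (lt_of_le_of_lt hk1 h)
    · exact ⟨y0, hy0, hlt1⟩
  · exact ⟨x0, hx0, hlt0⟩

end
end
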